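/- arXiv:2106.09519 — 2 statements merged into one kernel-verified Lean document; each statement's English description precedes it below -/
import Mathlib

section
/- Let M be a graded R-module and K, N graded submodules of M. Then qp-V^g_M(N) ∪ qp-V^g_M(K) = qp-V^g_M(N ∩ K). -/
section ModuleDefs

variable {G R M : Type*} [AddGroup G] [DecidableEq G] [CommRing R]
  [AddCommGroup M] [Module R M]
  (𝒜 : G → AddSubgroup R) [GradedRing 𝒜]
  (ℳ : G → AddSubgroup M) [DirectSum.Decomposition ℳ] [SetLike.GradedSMul 𝒜 ℳ]

def gradedRadical (I : Ideal R) : Set R :=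
  {r : R | ∀ g : G, ∃ n : ℕ, 0 < n ∧ (DirectSum.decompose 𝒜 r g : R) ^ n ∈ I}

/-- A graded submodule: contains the homogeneous components of all its elements. -/
def IsGradedSubmodule (N : Submodule R M) : Prop :=
  ∀ (g : G) ⦃m : M⦄, m ∈ N → (DirectSum.decompose ℳ m g : M) ∈ N

def IsGradedPrimeIdeal (P : Ideal R) : Prop :=
  P ≠ ⊤ ∧ (∀ (g : G) ⦃r : R⦄, r ∈ P → (DirectSum.decompose 𝒜 r g : R) ∈ P) ∧
    ∀ ⦃r s : R⦄, SetLike.IsHomogeneousElem 𝒜 r → SetLike.IsHomogeneousElem 𝒜 s →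
      r * s ∈ P → r ∈ P ∨ s ∈ P

/-- A graded prime submodule `P`: proper graded, and `r • m ∈ P` for homogeneous `r, m`
implies `m ∈ P` or `r ∈ (P :_R M)`. -/
def IsGradedPrimeSubmodule (P : Submodule R M) : Prop :=
  P ≠ ⊤ ∧ IsGradedSubmodule ℳ P ∧
    ∀ ⦃r : R⦄ ⦃m : M⦄, SetLike.IsHomogeneousElem 𝒜 r → SetLike.IsHomogeneousElem ℳ m →
      r • m ∈ P → m ∈ P ∨ r ∈ P.colon ⊤

/-- The graded radical `Gr_M(Q)` of a submodule: the intersection of all graded prime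
submodules containing `Q` (equal to `M` if there are none). -/
def gradedRadicalSubmodule (Q : Submodule R M) : Submodule R M :=
  sInf {P : Submodule R M | IsGradedPrimeSubmodule 𝒜 ℳ P ∧ Q ≤ P}

/-- A graded quasi-primary submodule `Q`: proper graded, and `r • m ∈ Q` for homogeneous
`r, m` implies `r ∈ Gr((Q :_R M))` or `m ∈ Gr_M(Q)`. -/
def IsGradedQuasiPrimarySubmodule (Q : Submodule R M) : Prop :=
  Q ≠ ⊤ ∧ IsGradedSubmodule ℳ Q ∧
    ∀ ⦃r : R⦄ ⦃m : M⦄, SetLike.IsHomogeneousElem 𝒜 r → SetLike.IsHomogeneousElem ℳ m →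
      r • m ∈ Q → r ∈ gradedRadical 𝒜 (Q.colon ⊤) ∨ m ∈ gradedRadicalSubmodule 𝒜 ℳ Q

/-- `K` satisfies the graded primeful property if every graded prime ideal containing
`(K :_R M)` is of the form `(P :_R M)` for a graded prime submodule `P ⊇ K`. -/
def SatisfiesGradedPrimeful (K : Submodule R M) : Prop :=
  ∀ p : Ideal R, IsGradedPrimeIdeal 𝒜 p → K.colon ⊤ ≤ p →
    ∃ P : Submodule R M, IsGradedPrimeSubmodule 𝒜 ℳ P ∧ K ≤ P ∧ P.colon ⊤ = p

/-- The graded quasi-primary spectrum of `M`: the graded quasi-primary submodules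
satisfying the graded primeful property. -/
def qpSpec : Set (Submodule R M) :=
  {Q : Submodule R M | IsGradedQuasiPrimarySubmodule 𝒜 ℳ Q ∧ SatisfiesGradedPrimeful 𝒜 ℳ Q}

/-- The variety `qp-V^g_M(K) = { Q ∈ qp.Spec_g(M) : Gr((Q:_R M)) ⊇ Gr((K:_R M)) }`. -/
def qpV (K : Submodule R M) : Set (qpSpec 𝒜 ℳ) :=
  {Q : qpSpec 𝒜 ℳ | gradedRadical 𝒜 (K.colon ⊤) ⊆ gradedRadical 𝒜 (Q.1.colon ⊤)}

/-- The quasi-Zariski topology on `qp.Spec_g(M)`, generated by the complements of the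
varieties of graded submodules. -/
def qpZariski : TopologicalSpace (qpSpec 𝒜 ℳ) :=
  TopologicalSpace.generateFrom
    {U : Set (qpSpec 𝒜 ℳ) | ∃ K : Submodule R M, IsGradedSubmodule ℳ K ∧ U = (qpV 𝒜 ℳ K)ᶜ}



section Aux
set_option linter.unusedSectionVars false
open DirectSum

lemma aux_smem {i j : G} {x : R} {m : M} (hx : x ∈ 𝒜 i) (hm : m ∈ ℳ j) :
    x • m ∈ ℳ (i + j) := by
  have := SetLike.GradedSMul.smul_mem hx hm
  rwa [vadd_eq_add] at this

lemma aux_smul_comp {m : M} {h : G} (hm : m ∈ ℳ h) (r : R) (g : G) :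
    (decompose ℳ (r • m) (g + h) : M) = (decompose 𝒜 r g : R) • m := by
  classical
  conv_lhs => rw [← DirectSum.sum_support_decompose 𝒜 r, Finset.sum_smul, decompose_sum]
  rw [DFinsupp.finset_sum_apply]
  push_cast
  rw [Finset.sum_eq_single g]
  · exact decompose_of_mem_same ℳ (aux_smem 𝒜 ℳ (SetLike.coe_mem _) hm)
  · intro b _ hb
    rw [decompose_of_mem_ne ℳ (aux_smem 𝒜 ℳ (SetLike.coe_mem _) hm)
      (fun hc => hb (add_right_cancel hc))]
  · intro hg
    rw [DFinsupp.notMem_support_iff.1 hg]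
    simp

/-- Components of a product land in any ideal containing all components of the right factor. -/
lemma aux_decompose_mul_mem {J : Ideal R} (a x : R)
    (hx : ∀ j : G, (decompose 𝒜 x j : R) ∈ J) (g : G) :
    (decompose 𝒜 (a * x) g : R) ∈ J := by
  classical
  rw [← DirectSum.sum_support_decompose 𝒜 a, ← DirectSum.sum_support_decompose 𝒜 x,
    Finset.sum_mul_sum, decompose_sum, DFinsupp.finset_sum_apply]
  push_cast
  refine Ideal.sum_mem _ fun i _ => ?_
  rw [decompose_sum, DFinsupp.finset_sum_apply]
  push_cast
  refine Ideal.sum_mem _ fun j _ => ?_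
  have hmem : (decompose 𝒜 a i : R) * (decompose 𝒜 x j : R) ∈ 𝒜 (i + j) :=
    SetLike.mul_mem_graded (SetLike.coe_mem _) (SetLike.coe_mem _)
  rcases eq_or_ne (i + j) g with hij | hij
  · rw [← hij, decompose_of_mem_same 𝒜 hmem]
    exact Ideal.mul_mem_left _ _ (hx j)
  · rw [decompose_of_mem_ne 𝒜 hmem hij]
    exact J.zero_mem

lemma gr_mono {I J : Ideal R} (hIJ : I ≤ J) :
    gradedRadical 𝒜 I ⊆ gradedRadical 𝒜 J := fun r hr g => by
  obtain ⟨n, hn, h⟩ := hr g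
  exact ⟨n, hn, hIJ h⟩

lemma mem_gr_of_homog {I : Ideal R} {x : R} {d : G} (hx : x ∈ 𝒜 d) {n : ℕ}
    (hn : 0 < n) (hxn : x ^ n ∈ I) : x ∈ gradedRadical 𝒜 I := by
  intro g
  rcases eq_or_ne g d with h | h
  · subst h
    exact ⟨n, hn, by rwa [decompose_of_mem_same 𝒜 hx]⟩
  · exact ⟨1, one_pos, by rw [decompose_of_mem_ne 𝒜 hx (Ne.symm h)]; simpa using I.zero_mem⟩

lemma exists_pow_of_mem_gr {I : Ideal R} {x : R} {d : G} (hx : x ∈ 𝒜 d)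
    (h : x ∈ gradedRadical 𝒜 I) : ∃ n, 0 < n ∧ x ^ n ∈ I := by
  obtain ⟨n, hn, h'⟩ := h d
  rw [decompose_of_mem_same 𝒜 hx] at h'
  exact ⟨n, hn, h'⟩

lemma not_mem_gr {I : Ideal R} {x : R} {d : G} (hx : x ∈ 𝒜 d)
    (h : x ∉ gradedRadical 𝒜 I) : ∀ n, 0 < n → x ^ n ∉ I :=
  fun n hn hxn => h (mem_gr_of_homog 𝒜 hx hn hxn)

/-- The colon ideal of a graded submodule is graded. -/
lemma colon_graded {Q : Submodule R M} (hQ : IsGradedSubmodule ℳ Q) (g : G) (r : R)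
    (hr : r ∈ Q.colon ⊤) : (decompose 𝒜 r g : R) ∈ Q.colon ⊤ := by
  rw [Submodule.mem_colon]
  intro m _
  refine DirectSum.Decomposition.inductionOn ℳ (motive := fun m => (decompose 𝒜 r g : R) • m ∈ Q)
    (by beta_reduce; rw [smul_zero]; exact Q.zero_mem) ?_ (fun x y hx hy => by
      beta_reduce; rw [smul_add]; exact Q.add_mem hx hy) m
  intro h x
  rw [← aux_smul_comp 𝒜 ℳ x.2 r g]
  exact hQ _ (Submodule.mem_colon.1 hr x trivial)

/-- Shrink a prime ideal containing a graded ideal to a graded prime ideal. -/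
lemma exists_graded_prime {I : Ideal R} (hI : ∀ g r, r ∈ I → (decompose 𝒜 r g : R) ∈ I)
    {p : Ideal R} (hp : p.IsPrime) (hIp : I ≤ p) {s : R} (hsp : s ∉ p) :
    ∃ q : Ideal R, IsGradedPrimeIdeal 𝒜 q ∧ I ≤ q ∧ s ∉ q := by
  set q : Ideal R := Ideal.span {x | SetLike.IsHomogeneousElem 𝒜 x ∧ x ∈ p} with hq
  have hqp : q ≤ p := Ideal.span_le.2 fun x hx => hx.2
  have hcomp : ∀ r ∈ q, ∀ g, (decompose 𝒜 r g : R) ∈ q := by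
    intro r hr
    refine Submodule.span_induction (p := fun r _ => ∀ g, (decompose 𝒜 r g : R) ∈ q)
      ?_ (by simp [q.zero_mem]) ?_ ?_ hr
    · rintro x ⟨⟨d, hd⟩, hxp⟩ g
      rcases eq_or_ne g d with h | h
      · subst h
        rw [decompose_of_mem_same 𝒜 hd]
        exact Ideal.subset_span ⟨⟨_, hd⟩, hxp⟩
      · rw [decompose_of_mem_ne 𝒜 hd (Ne.symm h)]
        exact q.zero_mem
    · intro x y _ _ hx hy g
      rw [decompose_add]
      push_cast [DirectSum.add_apply]
      exact q.add_mem (hx g) (hy g)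
    · intro a x _ hx g
      exact aux_decompose_mul_mem 𝒜 a x hx g
  refine ⟨q, ⟨?_, fun g r hr => hcomp r hr g, ?_⟩, ?_, fun h => hsp (hqp h)⟩
  · intro h
    exact hp.ne_top (Ideal.eq_top_iff_one p |>.2 (hqp (h ▸ Submodule.mem_top)))
  · intro r t hr ht hrt
    rcases hp.mem_or_mem (hqp hrt) with h | h
    · exact Or.inl (Ideal.subset_span ⟨hr, h⟩)
    · exact Or.inr (Ideal.subset_span ⟨ht, h⟩)
  · intro r hr
    classical
    rw [← DirectSum.sum_support_decompose 𝒜 r]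
    exact Ideal.sum_mem _ fun i _ =>
      Ideal.subset_span ⟨⟨i, SetLike.coe_mem _⟩, hIp (hI i r hr)⟩

/-- Key fact: `Gr((Q :_R M))` is "homogeneously prime" for `Q` in the
quasi-primary spectrum. -/
lemma gr_colon_prime {Q : Submodule R M} (hQmem : Q ∈ qpSpec 𝒜 ℳ) {r s : R} {i j : G}
    (hr : r ∈ 𝒜 i) (hs : s ∈ 𝒜 j) (hrs : r * s ∈ Q.colon ⊤) :
    r ∈ gradedRadical 𝒜 (Q.colon ⊤) ∨ s ∈ gradedRadical 𝒜 (Q.colon ⊤) := by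
  obtain ⟨⟨hQne, hQgr, hQqp⟩, hQpf⟩ := hQmem
  by_cases hrG : r ∈ gradedRadical 𝒜 (Q.colon ⊤)
  · exact Or.inl hrG
  right
  have hsm : ∀ m : M, s • m ∈ gradedRadicalSubmodule 𝒜 ℳ Q := by
    refine DirectSum.Decomposition.inductionOn ℳ
      (motive := fun m => s • m ∈ gradedRadicalSubmodule 𝒜 ℳ Q)
      (by beta_reduce; rw [smul_zero]; exact Submodule.zero_mem _) ?_ (fun x y hx hy => by
        beta_reduce; rw [smul_add]; exact Submodule.add_mem _ hx hy)
    intro h m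
    have hmem : r • (s • (m : M)) ∈ Q := by
      rw [← mul_smul]
      exact Submodule.mem_colon.1 hrs _ trivial
    rcases hQqp ⟨i, hr⟩ ⟨j + h, aux_smem 𝒜 ℳ hs m.2⟩ hmem with h1 | h2
    · exact absurd h1 hrG
    · exact h2
  by_contra hsG
  have hsn : ∀ n, 0 < n → s ^ n ∉ Q.colon ⊤ := not_mem_gr 𝒜 hs hsG
  have h1 : s ∉ (Q.colon ⊤).radical := by
    rintro ⟨n, hn⟩
    rcases Nat.eq_zero_or_pos n with h0 | h0
    · subst h0
      rw [pow_zero] at hn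
      exact hQne (top_unique fun m _ => by
        simpa using Submodule.mem_colon.1 hn m trivial)
    · exact hsn n h0 hn
  rw [Ideal.radical_eq_sInf, Ideal.mem_sInf] at h1
  push_neg at h1
  obtain ⟨p, ⟨hle, hpr⟩, hsp⟩ := h1
  obtain ⟨q, hq, hIq, hsq⟩ :=
    exists_graded_prime 𝒜 (fun g r => colon_graded 𝒜 ℳ hQgr g r) hpr hle hsp
  obtain ⟨P, hP, hQP, hPq⟩ := hQpf q hq hIq
  refine absurd ?_ hsq
  rw [← hPq]
  exact Submodule.mem_colon.2 fun m _ =>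
    Submodule.mem_sInf.1 (hsm m) P ⟨hP, hQP⟩

end Aux

/-- For graded submodules `N, K` of `M`, `qp-V^g_M(N) ∪ qp-V^g_M(K) = qp-V^g_M(N ∩ K)`. -/
theorem qpV_union (N K : Submodule R M)
    (hN : IsGradedSubmodule ℳ N) (hK : IsGradedSubmodule ℳ K) :
    qpV 𝒜 ℳ N ∪ qpV 𝒜 ℳ K = qpV 𝒜 ℳ (N ⊓ K) := by
  have hcolonN : (N ⊓ K).colon ⊤ ≤ N.colon ⊤ := fun r hr =>
    Submodule.mem_colon.2 fun m hm => (Submodule.mem_inf.1 (Submodule.mem_colon.1 hr m hm)).1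
  have hcolonK : (N ⊓ K).colon ⊤ ≤ K.colon ⊤ := fun r hr =>
    Submodule.mem_colon.2 fun m hm => (Submodule.mem_inf.1 (Submodule.mem_colon.1 hr m hm)).2
  ext Q
  simp only [Set.mem_union, qpV, Set.mem_setOf_eq]
  constructor
  · rintro (h | h) x hx
    · exact h (gr_mono 𝒜 hcolonN hx)
    · exact h (gr_mono 𝒜 hcolonK hx)
  · intro h
    by_contra hc
    push_neg at hc
    obtain ⟨hc1, hc2⟩ := hc
    obtain ⟨a, haN, haQ⟩ := Set.not_subset.1 hc1
    obtain ⟨b, hbK, hbQ⟩ := Set.not_subset.1 hc2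
    simp only [gradedRadical, Set.mem_setOf_eq, not_forall, not_exists, not_and] at haQ hbQ
    obtain ⟨g, hg⟩ := haQ
    obtain ⟨g', hg'⟩ := hbQ
    obtain ⟨n, hn, hrn⟩ := haN g
    obtain ⟨k, hk, hsk⟩ := hbK g'
    set r : R := (DirectSum.decompose 𝒜 a g : R) with hrdef
    set s : R := (DirectSum.decompose 𝒜 b g' : R) with hsdef
    have hrdeg : r ∈ 𝒜 g := SetLike.coe_mem _
    have hsdeg : s ∈ 𝒜 g' := SetLike.coe_mem _
    have hx1 : r ^ n * s ^ k ∈ (N ⊓ K).colon ⊤ := by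
      refine Submodule.mem_colon.2 fun m _ => Submodule.mem_inf.2 ⟨?_, ?_⟩
      · rw [mul_comm, mul_smul]
        exact N.smul_mem _ (Submodule.mem_colon.1 hrn m trivial)
      · rw [mul_smul]
        exact K.smul_mem _ (Submodule.mem_colon.1 hsk m trivial)
    have hxdeg : r ^ n * s ^ k ∈ 𝒜 (n • g + k • g') :=
      SetLike.mul_mem_graded (SetLike.pow_mem_graded n hrdeg)
        (SetLike.pow_mem_graded k hsdeg)
    have hxG : r ^ n * s ^ k ∈ gradedRadical 𝒜 ((N ⊓ K).colon ⊤) :=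
      mem_gr_of_homog 𝒜 hxdeg one_pos (by simpa using hx1)
    obtain ⟨t, ht, hxt⟩ := exists_pow_of_mem_gr 𝒜 hxdeg (h hxG)
    have hxt' : r ^ (n * t) * s ^ (k * t) ∈ Q.1.colon ⊤ := by
      rw [pow_mul, pow_mul, ← mul_pow]
      exact hxt
    rcases gr_colon_prime 𝒜 ℳ Q.2 (SetLike.pow_mem_graded (n * t) hrdeg)
        (SetLike.pow_mem_graded (k * t) hsdeg) hxt' with hmem | hmem
    · obtain ⟨u, hu, hru⟩ := exists_pow_of_mem_gr 𝒜 (SetLike.pow_mem_graded (n * t) hrdeg) hmem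
      rw [← pow_mul] at hru
      exact hg (n * t * u) (Nat.mul_pos (Nat.mul_pos hn ht) hu) hru
    · obtain ⟨u, hu, hsu⟩ := exists_pow_of_mem_gr 𝒜 (SetLike.pow_mem_graded (k * t) hsdeg) hmem
      rw [← pow_mul] at hsu
      exact hg' (k * t * u) (Nat.mul_pos (Nat.mul_pos hk ht) hu) hsu


end ModuleDefs
end

section
/- Let M be a graded R-module and {K_i : i ∈ I} a family of graded submodules of M. Then ∩_{i∈I} qp-V^g_M(K_i) = qp-V^g_M((Σ_{i∈I}(K_i :_R M))M). -/
section ModuleDefs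

variable {G R M : Type*} [AddGroup G] [DecidableEq G] [CommRing R]
  [AddCommGroup M] [Module R M]
  (𝒜 : G → AddSubgroup R) [GradedRing 𝒜]
  (ℳ : G → AddSubgroup M) [DirectSum.Decomposition ℳ] [SetLike.GradedSMul 𝒜 ℳ]

open DirectSum in
lemma aux_mem_iff_radical {J : Ideal R} {r : R} :
    r ∈ gradedRadical 𝒜 J ↔ ∀ g : G, (decompose 𝒜 r g : R) ∈ J.radical := by
  constructor
  · intro h g
    obtain ⟨n, _, hn⟩ := h g
    exact ⟨n, hn⟩
  · intro h g
    obtain ⟨n, hn⟩ := h g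
    rcases Nat.eq_zero_or_pos n with rfl | h0
    · rw [pow_zero] at hn
      exact ⟨1, one_pos, by
        rw [pow_one, ← mul_one ((decompose 𝒜 r g : R))]; exact J.mul_mem_left _ hn⟩
    · exact ⟨n, h0, hn⟩

open DirectSum in
lemma aux_homog_mem_iff {J : Ideal R} {x : R} {d : G} (hx : x ∈ 𝒜 d) :
    x ∈ gradedRadical 𝒜 J ↔ ∃ n : ℕ, 0 < n ∧ x ^ n ∈ J := by
  constructor
  · intro h
    obtain ⟨n, h0, hn⟩ := h d
    rw [decompose_of_mem_same 𝒜 hx] at hn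
    exact ⟨n, h0, hn⟩
  · rintro ⟨n, h0, hn⟩ g
    by_cases hg : g = d
    · subst hg
      rw [decompose_of_mem_same 𝒜 hx]
      exact ⟨n, h0, hn⟩
    · rw [decompose_of_mem_ne 𝒜 hx (fun h => hg h.symm)]
      exact ⟨1, one_pos, by rw [pow_one]; exact J.zero_mem⟩

open DirectSum in
lemma aux_zero_mem {J : Ideal R} : (0 : R) ∈ gradedRadical 𝒜 J :=
  (aux_mem_iff_radical 𝒜).2 fun g => by
    rw [decompose_zero]
    simpa using J.radical.zero_mem

open DirectSum in
lemma aux_add_mem {J : Ideal R} {a b : R} (ha : a ∈ gradedRadical 𝒜 J)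
    (hb : b ∈ gradedRadical 𝒜 J) : a + b ∈ gradedRadical 𝒜 J := by
  rw [aux_mem_iff_radical] at ha hb ⊢
  intro g
  rw [decompose_add]
  simpa using J.radical.add_mem (ha g) (hb g)

open DirectSum in
lemma aux_mul_mem {J : Ideal R} (c : R) {r : R} (hr : r ∈ gradedRadical 𝒜 J) :
    c * r ∈ gradedRadical 𝒜 J := by
  rw [aux_mem_iff_radical] at hr ⊢
  induction c using DirectSum.Decomposition.inductionOn 𝒜 with
  | zero =>
    intro g
    rw [zero_mul, decompose_zero]
    simpa using J.radical.zero_mem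
  | homogeneous c =>
    rename_i d
    intro g
    have hg : g = d + (-d + g) := by simp
    rw [hg, coe_decompose_mul_add_of_left_mem 𝒜 c.2]
    exact J.radical.mul_mem_left _ (hr _)
  | add a b ha hb =>
    intro g
    rw [add_mul, decompose_add]
    simpa using J.radical.add_mem (ha g) (hb g)

/-- The graded radical as an ideal. -/
def gradedRadicalIdeal (J : Ideal R) : Ideal R where
  carrier := gradedRadical 𝒜 J
  zero_mem' := aux_zero_mem 𝒜
  add_mem' ha hb := aux_add_mem 𝒜 ha hb
  smul_mem' c r hr := by
    rw [smul_eq_mul]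
    exact aux_mul_mem 𝒜 c hr

lemma aux_mem_gradedRadicalIdeal {J : Ideal R} {r : R} :
    r ∈ gradedRadicalIdeal 𝒜 J ↔ r ∈ gradedRadical 𝒜 J := Iff.rfl

lemma aux_mono {J J' : Ideal R} (h : J ≤ J') :
    gradedRadical 𝒜 J ⊆ gradedRadical 𝒜 J' := by
  intro r hr g
  obtain ⟨n, h0, hn⟩ := hr g
  exact ⟨n, h0, h hn⟩

lemma aux_graded_le {J : Ideal R}
    (hJ : ∀ (g : G) ⦃r : R⦄, r ∈ J → (DirectSum.decompose 𝒜 r g : R) ∈ J) {r : R}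
    (hr : r ∈ J) : r ∈ gradedRadical 𝒜 J :=
  fun g => ⟨1, one_pos, by rw [pow_one]; exact hJ g hr⟩

lemma aux_homog_pow {x : R} (hx : SetLike.IsHomogeneousElem 𝒜 x) (n : ℕ) :
    SetLike.IsHomogeneousElem 𝒜 (x ^ n) := by
  induction n with
  | zero => rw [pow_zero]; exact SetLike.isHomogeneousElem_one 𝒜
  | succ n ih => rw [pow_succ]; exact SetLike.IsHomogeneousElem.mul ih hx

lemma aux_mem_of_pow_mem {p : Ideal R} (hp : IsGradedPrimeIdeal 𝒜 p) {x : R}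
    (hx : SetLike.IsHomogeneousElem 𝒜 x) {n : ℕ} (h0 : 0 < n) (hn : x ^ n ∈ p) : x ∈ p := by
  induction n with
  | zero => exact absurd h0 (lt_irrefl 0)
  | succ n ih =>
    rcases Nat.eq_zero_or_pos n with rfl | h0'
    · rwa [pow_one] at hn
    · rw [pow_succ] at hn
      rcases hp.2.2 (aux_homog_pow 𝒜 hx n) hx hn with h | h
      · exact ih h0' h
      · exact h

open DirectSum in
lemma aux_gradedRadical_le_self {p : Ideal R} (hp : IsGradedPrimeIdeal 𝒜 p) {r : R}
    (hr : r ∈ gradedRadical 𝒜 p) : r ∈ p := by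
  classical
  letI : ∀ (i : G) (x : 𝒜 i), Decidable (x ≠ 0) := fun _ _ => Classical.propDecidable _
  rw [← DirectSum.sum_support_decompose 𝒜 r]
  refine p.sum_mem fun g _ => ?_
  obtain ⟨n, h0, hn⟩ := hr g
  exact aux_mem_of_pow_mem 𝒜 hp ⟨g, SetLike.coe_mem _⟩ h0 hn

open DirectSum in
/-- Zorn: a graded ideal avoiding all powers of a homogeneous element is contained in a
graded prime ideal avoiding that element. -/
lemma aux_exists_gradedPrime {J : Ideal R}
    (hJ : ∀ (g : G) ⦃r : R⦄, r ∈ J → (decompose 𝒜 r g : R) ∈ J)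
    {x : R} {d : G} (hx : x ∈ 𝒜 d) (hpow : ∀ n : ℕ, 0 < n → x ^ n ∉ J) :
    ∃ p : Ideal R, IsGradedPrimeIdeal 𝒜 p ∧ J ≤ p ∧ x ∉ p := by
  set S : Set (Ideal R) :=
    {I | J ≤ I ∧ (∀ (g : G) ⦃r : R⦄, r ∈ I → (decompose 𝒜 r g : R) ∈ I) ∧
      ∀ n : ℕ, 0 < n → x ^ n ∉ I} with hS
  obtain ⟨I, hJI, hIS, hImax⟩ :
      ∃ I, J ≤ I ∧ Maximal (· ∈ S) I := by
    refine zorn_le_nonempty₀ S ?_ J ⟨le_rfl, hJ, hpow⟩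
    intro c hcS hc y hy
    refine ⟨sSup c, ⟨?_, ?_, ?_⟩, fun z hz => le_sSup hz⟩
    · exact le_trans (hcS hy).1 (le_sSup hy)
    · intro g r hr
      obtain ⟨I, hIc, hrI⟩ := (Submodule.mem_sSup_of_directed ⟨y, hy⟩ hc.directedOn).1 hr
      exact le_sSup hIc ((hcS hIc).2.1 g hrI)
    · intro n hn hmem
      obtain ⟨I, hIc, hrI⟩ := (Submodule.mem_sSup_of_directed ⟨y, hy⟩ hc.directedOn).1 hmem
      exact (hcS hIc).2.2 n hn hrI
  have hxI : x ∉ I := fun h => hIS.2.2 1 one_pos (by rwa [pow_one])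
  -- key step: enlarging by a homogeneous element not in I captures a power of x
  have key : ∀ y : R, SetLike.IsHomogeneousElem 𝒜 y → y ∉ I →
      ∃ n : ℕ, 0 < n ∧ x ^ n ∈ I ⊔ Ideal.span {y} := by
    intro y hy hyI
    by_contra hcon
    push_neg at hcon
    obtain ⟨e, hye⟩ := hy
    have hmem : I ⊔ Ideal.span {y} ∈ S := by
      refine ⟨le_trans hIS.1 le_sup_left, ?_, fun n hn => hcon n hn⟩
      intro g r hr
      obtain ⟨i, hi, t, ht, rfl⟩ := Submodule.mem_sup.1 hr
      obtain ⟨c, rfl⟩ := Ideal.mem_span_singleton'.1 ht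
      rw [decompose_add]
      refine Submodule.add_mem _ (Submodule.mem_sup_left ?_) (Submodule.mem_sup_right ?_)
      · simpa using hIS.2.1 g hi
      · have hg : g = (g - e) + e := by simp
        rw [hg, coe_decompose_mul_add_of_right_mem 𝒜 hye]
        simpa using Ideal.mem_span_singleton'.2 ⟨_, rfl⟩
    have hle : I ⊔ Ideal.span {y} ≤ I := hImax hmem le_sup_left
    exact hyI (hle (Submodule.mem_sup_right (Ideal.subset_span rfl)))
  refine ⟨I, ⟨?_, hIS.2.1, ?_⟩, hIS.1, hxI⟩
  · intro htop
    exact hIS.2.2 1 one_pos (htop ▸ Submodule.mem_top)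
  · intro a b ha hb hab
    by_contra hcon
    push_neg at hcon
    obtain ⟨n, hn0, hna⟩ := key a ha hcon.1
    obtain ⟨m, hm0, hmb⟩ := key b hb hcon.2
    obtain ⟨i₁, hi₁, t₁, ht₁, e₁⟩ := Submodule.mem_sup.1 hna
    obtain ⟨c₁, rfl⟩ := Ideal.mem_span_singleton'.1 ht₁
    obtain ⟨i₂, hi₂, t₂, ht₂, e₂⟩ := Submodule.mem_sup.1 hmb
    obtain ⟨c₂, rfl⟩ := Ideal.mem_span_singleton'.1 ht₂
    have hx2 : x ^ (n + m) = i₁ * (i₂ + c₂ * b) + i₂ * (c₁ * a) + (c₁ * c₂) * (a * b) := by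
      rw [pow_add, ← e₁, ← e₂]; ring
    refine hIS.2.2 (n + m) (by omega) ?_
    rw [hx2]
    exact I.add_mem (I.add_mem (I.mul_mem_right _ hi₁) (I.mul_mem_right _ hi₂))
      (I.mul_mem_left _ hab)

open DirectSum in
lemma aux_decompose_smul_of_mem {m : M} {j : G} (hm : m ∈ ℳ j) (r : R) (g : G) :
    (decompose ℳ (r • m) (g + j) : M) = (decompose 𝒜 r g : R) • m := by
  induction r using DirectSum.Decomposition.inductionOn 𝒜 with
  | zero =>
    rw [zero_smul, decompose_zero, decompose_zero]
    simp
  | homogeneous c =>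
    rename_i d
    have hcm : (c : R) • m ∈ ℳ (d + j) := SetLike.GradedSMul.smul_mem c.2 hm
    by_cases hg : g = d
    · subst hg
      rw [decompose_of_mem_same ℳ hcm, decompose_of_mem_same 𝒜 c.2]
    · rw [decompose_of_mem_ne ℳ hcm (fun h => hg (add_right_cancel h).symm),
        decompose_of_mem_ne 𝒜 c.2 (fun h => hg h.symm), zero_smul]
  | add a b ha hb =>
    rw [add_smul, decompose_add, decompose_add]
    simp only [DirectSum.add_apply, AddSubgroup.coe_add, add_smul]
    rw [ha, hb]

open DirectSum in
lemma aux_colon_graded {Q : Submodule R M} (hQ : IsGradedSubmodule ℳ Q) (g : G) {r : R}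
    (hr : r ∈ Q.colon ⊤) : (decompose 𝒜 r g : R) ∈ Q.colon ⊤ := by
  rw [Submodule.mem_colon] at hr ⊢
  intro m hm
  clear hm
  induction m using DirectSum.Decomposition.inductionOn ℳ with
  | zero => rw [smul_zero]; exact Q.zero_mem
  | homogeneous c =>
    rw [← aux_decompose_smul_of_mem 𝒜 ℳ c.2 r g]
    exact hQ _ (hr c (Set.mem_univ _))
  | add a b ha hb => rw [smul_add]; exact Q.add_mem ha hb

open DirectSum in
lemma aux_grColon_prime {Q : Submodule R M} (hQ : Q ∈ qpSpec 𝒜 ℳ) :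
    IsGradedPrimeIdeal 𝒜 (gradedRadicalIdeal 𝒜 (Q.colon ⊤)) := by
  obtain ⟨⟨hQtop, hQgr, hQqp⟩, hQpf⟩ := hQ
  refine ⟨?_, ?_, ?_⟩
  · intro htop
    have h1 : (1 : R) ∈ gradedRadicalIdeal 𝒜 (Q.colon ⊤) := htop ▸ Submodule.mem_top
    obtain ⟨n, _, hn⟩ := (aux_homog_mem_iff 𝒜 (SetLike.one_mem_graded 𝒜)).1 h1
    rw [one_pow] at hn
    refine hQtop (Submodule.eq_top_iff'.2 fun m => ?_)
    simpa using Submodule.mem_colon.1 hn m (Set.mem_univ _)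
  · intro g r hr
    refine (aux_homog_mem_iff 𝒜 (SetLike.coe_mem (decompose 𝒜 r g))).2 ?_
    exact hr g
  · rintro r s ⟨d₁, hr⟩ ⟨d₂, hs⟩ hrs
    by_cases hrT : r ∈ gradedRadicalIdeal 𝒜 (Q.colon ⊤)
    · exact Or.inl hrT
    right
    have hrsh : r * s ∈ 𝒜 (d₁ + d₂) := SetLike.mul_mem_graded hr hs
    obtain ⟨n, hn0, hn⟩ := (aux_homog_mem_iff 𝒜 hrsh).1 hrs
    -- for every homogeneous m, s ^ n • m lies in the graded radical submodule of Q
    have hstep : ∀ m : M, s ^ n • m ∈ gradedRadicalSubmodule 𝒜 ℳ Q := by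
      have hhom : ∀ (j : G) (m : M), m ∈ ℳ j → s ^ n • m ∈ gradedRadicalSubmodule 𝒜 ℳ Q := by
        intro j m hm
        have h1 : (r ^ n) • (s ^ n • m) ∈ Q := by
          rw [← mul_smul, ← mul_pow]
          exact Submodule.mem_colon.1 hn m (Set.mem_univ _)
        rcases hQqp (aux_homog_pow 𝒜 ⟨d₁, hr⟩ n) (SetLike.IsHomogeneousElem.graded_smul
            (aux_homog_pow 𝒜 ⟨d₂, hs⟩ n) ⟨j, hm⟩) h1 with h | h
        · exfalso
          apply hrT
          obtain ⟨dn, hdn⟩ := aux_homog_pow 𝒜 ⟨d₁, hr⟩ n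
          obtain ⟨k, hk0, hk⟩ := (aux_homog_mem_iff 𝒜 hdn).1 h
          rw [← pow_mul] at hk
          exact (aux_homog_mem_iff 𝒜 hr).2 ⟨n * k, Nat.mul_pos hn0 hk0, hk⟩
        · exact h
      intro m
      induction m using DirectSum.Decomposition.inductionOn ℳ with
      | zero => rw [smul_zero]; exact Submodule.zero_mem _
      | homogeneous c => exact hhom _ _ c.2
      | add a b ha hb => rw [smul_add]; exact Submodule.add_mem _ ha hb
    by_contra hsT
    have hspow : ∀ k : ℕ, 0 < k → (s ^ n) ^ k ∉ Q.colon ⊤ := by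
      intro k hk0 hk
      rw [← pow_mul] at hk
      exact hsT ((aux_homog_mem_iff 𝒜 hs).2 ⟨n * k, Nat.mul_pos hn0 hk0, hk⟩)
    obtain ⟨dn, hdn⟩ := aux_homog_pow 𝒜 ⟨d₂, hs⟩ n
    obtain ⟨p, hp, hJp, hxp⟩ :=
      aux_exists_gradedPrime 𝒜 (fun g r hr => aux_colon_graded 𝒜 ℳ hQgr g hr) hdn hspow
    obtain ⟨P, hP, hQP, hPc⟩ := hQpf p hp hJp
    apply hxp
    rw [← hPc]
    refine Submodule.mem_colon.2 fun m hm => ?_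
    have hPle : gradedRadicalSubmodule 𝒜 ℳ Q ≤ P := sInf_le ⟨hP, hQP⟩
    exact hPle (hstep m)

/-- For a family of graded submodules `K i` of `M`,
`⋂ i, qp-V^g_M(K i) = qp-V^g_M((Σ_i (K_i :_R M)) M)`. -/
theorem qpV_iInter {ι : Type*} (K : ι → Submodule R M)
    (hK : ∀ i, IsGradedSubmodule ℳ (K i)) :
    ⋂ i, qpV 𝒜 ℳ (K i) =
      qpV 𝒜 ℳ ((⨆ i, (K i).colon ⊤) • (⊤ : Submodule R M)) := by
  classical
  ext Q
  obtain ⟨Q, hQ⟩ := Q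
  simp only [qpV, Set.mem_iInter, Set.mem_setOf_eq]
  constructor
  · intro h
    have hT := aux_grColon_prime 𝒜 ℳ hQ
    have hle : Q.colon ⊤ ≤ gradedRadicalIdeal 𝒜 (Q.colon ⊤) := fun r hr =>
      aux_graded_le 𝒜 (fun g r hr => aux_colon_graded 𝒜 ℳ hQ.1.2.1 g hr) hr
    obtain ⟨P, hP, hQP, hPc⟩ := hQ.2 _ hT hle
    have hNP : (⨆ i, (K i).colon ⊤) • (⊤ : Submodule R M) ≤ P := by
      rw [Submodule.smul_le]
      intro r hr m _
      have hsup : (⨆ i, (K i).colon ⊤) ≤ gradedRadicalIdeal 𝒜 (Q.colon ⊤) := by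
        refine iSup_le fun i x hx => ?_
        exact h i (aux_graded_le 𝒜 (fun g y hy => aux_colon_graded 𝒜 ℳ (hK i) g hy) hx)
      have hrT := hsup hr
      rw [← hPc] at hrT
      exact Submodule.mem_colon.1 hrT m (Set.mem_univ _)
    intro x hx
    have h1 : (((⨆ i, (K i).colon ⊤) • ⊤ : Submodule R M)).colon ⊤ ≤
        gradedRadicalIdeal 𝒜 (Q.colon ⊤) := by
      rw [← hPc]
      exact fun r hr => Submodule.mem_colon.2 fun m hm => hNP (Submodule.mem_colon.1 hr m hm)
    exact aux_gradedRadical_le_self 𝒜 hT (aux_mono 𝒜 h1 hx)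
  · intro h i
    refine subset_trans (aux_mono 𝒜 ?_) h
    intro x hx
    exact Submodule.mem_colon.2 fun m hm =>
      Submodule.smul_mem_smul (le_iSup (fun i => (K i).colon ⊤) i hx) hm

end ModuleDefs
end
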